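/- (Zipper Lemma 1) Let π, π' be path decompositions of a common quasi-flow f on a directed acyclic graph. Let P ∈ supp(π), let {P_u}_{u=1}^U ⊆ supp(π'), and suppose for some fixed 1 ≤ k̄ < |P| that s↑_{k̄}(P) = s↑_{k̄}(P_u) for each u. If π(P) ≤ Σ_{u=1}^U π'(P_u), then there exist a finite sequence of weighted Ryser swaps (c_v R_v)_{v=1}^V and a finite set of paths {P_w}_{w=1}^W with s↑_{k̄+1}(P) = s↑_{k̄+1}(P_w) for all w, such that π(P) ≤ Σ_{w=1}^W ( π'(P_w) + Σ_{v=1}^V c_v ⟨R_v, e_{P_w}⟩ ), where e_{P_w} denotes the P_w-th standard basis vector of ℝ^𝒫. -/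

import Mathlib

open scoped Classical

namespace StmtDAG

variable {N E : Type*} [Fintype N] [Fintype E] [DecidableEq N] [DecidableEq E]

/-- `(src, tgt, s, t)` describes a directed acyclic graph with finite node type `N` and
finite edge type `E` (parallel edges are allowed, since `E` is an abstract type with
endpoint maps): there is no directed cycle, `s` is the unique node with no incoming edge
(the source), and `t` is the unique node with no outgoing edge (the sink). -/
def IsDAG (src tgt : E → N) (s t : N) : Prop :=
  (∀ a : N, ¬ Relation.TransGen (fun a b => ∃ e, src e = a ∧ tgt e = b) a a) ∧
  (∀ e, tgt e ≠ s) ∧ (∀ e, src e ≠ t) ∧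
  (∀ n, (∀ e, tgt e ≠ n) → n = s) ∧
  (∀ n, (∀ e, src e ≠ n) → n = t)

variable (src tgt : E → N) (s t : N)

/-- A path from `s` to `t`: a nonempty list of consecutive edges starting at `s` and
ending at `t`.  (In a DAG these are in bijective correspondence with the edge *sets* in
which `s` and `t` each appear exactly once and every other node appearing at all appears
exactly once as a head and once as a tail.) -/
structure GPath where
  /-- the edges of the path, in order from the source to the sink -/
  edges : List E
  ne : edges ≠ []
  chain : edges.Chain' fun e f => tgt e = src f
  first : src (edges.head ne) = s
  last : tgt (edges.getLast ne) = t

/-- A quasi-flow: a nonnegative edge weighting such that, at every node other than the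
source and the sink, total in-flow equals total out-flow. -/
def IsQuasiFlow (f : E → ℝ) : Prop :=
  (∀ e, 0 ≤ f e) ∧
  ∀ n : N, n ≠ s → n ≠ t →
    (∑ e : E, if tgt e = n then f e else 0) = (∑ e : E, if src e = n then f e else 0)

/-- `π` is a path decomposition of the quasi-flow `f`: a nonnegative weighting of paths
whose induced edge weights recover `f`. -/
def IsPathDecomp (f : E → ℝ) (π : GPath src tgt s t → ℝ) : Prop :=
  (∀ P, 0 ≤ π P) ∧
  ∀ e : E, f e = ∑ᶠ P : GPath src tgt s t, if e ∈ P.edges then π P else 0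

/-- `P.edges = a ++ b`, split exactly at the node `n`. -/
def SplitsAt (P : GPath src tgt s t) (n : N) (a b : List E) : Prop :=
  P.edges = a ++ b ∧ (∀ h : b ≠ [], src (b.head h) = n) ∧ (b = [] → n = t)

/-- `(Q₁, Q₂)` are the `n`-conjugates of the pair `(P₁, P₂)`, both of which pass through
the node `n`: `Q₁` follows `P₁` up to `n` and `P₂` thereafter, and vice versa. -/
def IsConjAt (n : N) (P₁ P₂ Q₁ Q₂ : GPath src tgt s t) : Prop :=
  ∃ a₁ b₁ a₂ b₂ : List E,
    SplitsAt src tgt s t P₁ n a₁ b₁ ∧ SplitsAt src tgt s t P₂ n a₂ b₂ ∧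
    Q₁.edges = a₁ ++ b₂ ∧ Q₂.edges = a₂ ++ b₁

/-- The indicator (point mass) vector of a path. -/
noncomputable def indP (P₀ : GPath src tgt s t) : GPath src tgt s t → ℝ :=
  fun P => if P = P₀ then 1 else 0

/-- A Ryser swap: `1_{Q₁} + 1_{Q₂} - 1_{P₁} - 1_{P₂}` where `(Q₁, Q₂)` are the
`n`-conjugates of a pair `(P₁, P₂)` compatible at some node `n`. -/
def IsRyserSwap (R : GPath src tgt s t → ℝ) : Prop :=
  ∃ (n : N) (P₁ P₂ Q₁ Q₂ : GPath src tgt s t),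
    IsConjAt src tgt s t n P₁ P₂ Q₁ Q₂ ∧
    R = indP src tgt s t Q₁ + indP src tgt s t Q₂ -
          indP src tgt s t P₁ - indP src tgt s t P₂

/-- The Ryser subspace: the linear span of all Ryser swaps. -/
noncomputable def RyserSub : Submodule ℝ (GPath src tgt s t → ℝ) :=
  Submodule.span ℝ {R | IsRyserSwap src tgt s t R}

/-- `π` is a probability distribution on the path set. -/
def IsDistP (π : GPath src tgt s t → ℝ) : Prop :=
  (∀ P, 0 ≤ π P) ∧ ∑ᶠ P : GPath src tgt s t, π P = 1


section Helpers

set_option linter.unusedSectionVars false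

variable {src tgt s t}

lemma GPath.ext' {P Q : GPath src tgt s t} (h : P.edges = Q.edges) : P = Q := by
  cases P; cases Q; cases h; rfl

/-- a nonempty chain of edges gives a TransGen step from src of head to tgt of last -/
lemma chain_transGen : ∀ (l : List E) (h : l ≠ []),
    l.Chain' (fun e f => tgt e = src f) →
    Relation.TransGen (fun a b => ∃ e, src e = a ∧ tgt e = b) (src (l.head h)) (tgt (l.getLast h)) := by
  intro l
  induction l with
  | nil => intro h; exact absurd rfl h
  | cons e r ih =>
    intro h hc
    cases r with
    | nil => exact Relation.TransGen.single ⟨e, rfl, rfl⟩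
    | cons f r' =>
      have hc' : (f :: r').Chain' (fun e f => tgt e = src f) := hc.tail
      have hlink : tgt e = src f := (List.isChain_cons_cons.mp hc).1
      have h2 := ih (by simp) hc'
      simp only [List.head_cons] at h2
      have hgl : (e :: f :: r').getLast h = (f :: r').getLast (by simp) := by
        simp [List.getLast_cons]
      rw [hgl]
      exact Relation.TransGen.head ⟨e, rfl, hlink⟩ h2

/-- in a DAG, two distinct edges of a chain have distinct sources -/
lemma no_two_src_eq (hdag : IsDAG src tgt s t) {l : List E}
    (hc : l.Chain' fun e f => tgt e = src f) {i j : ℕ} (hij : i < j) (hj : j < l.length)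
    (hi : i < l.length) : src l[i] ≠ src l[j] := by
  intro heq
  set m := (l.drop i).take (j - i) with hm
  have hdl : i + (j - i) ≤ l.length := by omega
  have hml : m.length = j - i := by
    simp [hm]; omega
  have hmne : m ≠ [] := by
    intro h0; rw [h0] at hml; simp at hml; omega
  have hchm : m.Chain' fun e f => tgt e = src f :=
    hc.infix (((List.take_prefix _ _).isInfix).trans (List.drop_suffix i l).isInfix)
  have hhead : m.head hmne = l[i] := by
    rw [List.head_eq_getElem]
    simp only [hm]
    rw [List.getElem_take, List.getElem_drop]
    simp
  have hlast : m.getLast hmne = l[j-1] := by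
    rw [List.getLast_eq_getElem]
    simp only [hm, hml]
    rw [List.getElem_take, List.getElem_drop]
    congr 1
    simp only [List.length_take, List.length_drop]
    omega
  have hlink : tgt l[j-1] = src l[j] := by
    have := List.isChain_iff_getElem.mp hc (j-1) (by omega)
    simpa [List.get_eq_getElem, show j - 1 + 1 = j by omega] using this
  have h3 := chain_transGen (tgt := tgt) m hmne hchm
  rw [hhead, hlast, hlink, ← heq] at h3
  exact hdag.1 _ h3

lemma gpath_nodup (hdag : IsDAG src tgt s t) (P : GPath src tgt s t) : P.edges.Nodup := by
  rw [List.nodup_iff_injective_get]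
  intro a b h
  by_contra hne
  rcases lt_or_gt_of_ne (fun hh : a = b => hne (by cases a; cases b; simp_all)) with hlt | hlt
  · exact no_two_src_eq hdag P.chain hlt b.2 a.2 (by simp [List.get_eq_getElem] at h; rw [h])
  · exact no_two_src_eq hdag P.chain hlt a.2 b.2 (by simp [List.get_eq_getElem] at h; rw [h])

lemma gpath_finite (hdag : IsDAG src tgt s t) : Finite (GPath src tgt s t) := by
  have hfin : {l : List E | l.length ≤ Fintype.card E}.Finite := List.finite_length_le E _
  have : Finite {l : List E // l.length ≤ Fintype.card E} := hfin.to_subtype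
  exact Finite.of_injective
    (fun P => (⟨P.edges, (gpath_nodup hdag P).length_le_card⟩ :
      {l : List E // l.length ≤ Fintype.card E}))
    (fun P Q h => GPath.ext' (congrArg Subtype.val h))

lemma not_mem_take_indexOf (l : List E) (x : E) : x ∉ l.take (l.idxOf x) := by
  induction l with
  | nil => simp
  | cons a r ih =>
    by_cases h : x = a
    · subst h; simp [List.idxOf_cons_self]
    · rw [List.idxOf_cons_ne _ (fun hh => h hh.symm)]
      simp only [List.take_succ_cons, List.mem_cons]
      rintro (rfl | hmem)
      · exact h rfl
      · exact ih hmem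

lemma indexOf_append_left (l₁ l₂ : List E) (x : E) (h : x ∉ l₁) :
    (l₁ ++ l₂).idxOf x = l₁.length + l₂.idxOf x := by
  induction l₁ with
  | nil => simp
  | cons a r ih =>
    simp only [List.mem_cons, not_or] at h
    rw [List.cons_append, List.idxOf_cons_ne _ (fun hh => h.1 hh.symm), ih h.2]
    simp [Nat.succ_add]

/-- glue a prefix of `P` with a suffix of `Q` -/
lemma gpath_glue (P Q : GPath src tgt s t) (a d : List E) (ha : a ≠ []) (hd : d ≠ [])
    (hPa : ∃ b, P.edges = a ++ b) (hQd : ∃ c, Q.edges = c ++ d)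
    (h : tgt (a.getLast ha) = src (d.head hd)) :
    ∃ R : GPath src tgt s t, R.edges = a ++ d := by
  obtain ⟨b, hb⟩ := hPa
  obtain ⟨c, hcc⟩ := hQd
  obtain ⟨pe, pne, pch, pf, pl⟩ := P
  obtain ⟨qe, qne, qch, qf, ql⟩ := Q
  simp only at hb hcc
  subst hb; subst hcc
  have hchaina : a.Chain' fun e f => tgt e = src f := (List.isChain_append.mp pch).1
  have hchaind : d.Chain' fun e f => tgt e = src f := (List.isChain_append.mp qch).2.1
  have hne : a ++ d ≠ [] := by simp [ha]
  have hchain : (a ++ d).Chain' fun e f => tgt e = src f := by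
    apply List.isChain_append.mpr
    refine ⟨hchaina, hchaind, ?_⟩
    intro x hx y hy
    rw [List.getLast?_eq_getLast ha, Option.mem_def, Option.some_inj] at hx
    rw [List.head?_eq_head hd, Option.mem_def, Option.some_inj] at hy
    rw [← hx, ← hy]; exact h
  have hfirst : src ((a ++ d).head hne) = s := by
    rw [List.head_append_of_ne_nil ha]
    rw [List.head_append_of_ne_nil ha] at pf
    exact pf
  have hlast : tgt ((a ++ d).getLast hne) = t := by
    rw [List.getLast_append hne, dif_neg (by simpa [List.isEmpty_iff] using hd)]
    rw [List.getLast_append qne, dif_neg (by simpa [List.isEmpty_iff] using hd)] at ql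
    exact ql
  exact ⟨⟨a ++ d, hne, hchain, hfirst, hlast⟩, rfl⟩

/-- a path sharing the first `kbar ≥ 1` edges with `P` is longer than `kbar` and leaves the
`kbar`-th node by an edge with the same source -/
lemma split_lemma (hdag : IsDAG src tgt s t) (P Z : GPath src tgt s t)
    (kbar : ℕ) (hk1 : 1 ≤ kbar) (hk2 : kbar < P.edges.length)
    (hZ : Z.edges.take kbar = P.edges.take kbar) :
    ∃ h2 : kbar < Z.edges.length,
      src (Z.edges[kbar]'h2) = src (P.edges[kbar]'hk2) := by
  have hlen : kbar ≤ Z.edges.length := by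
    have := congrArg List.length hZ
    simp only [List.length_take] at this
    omega
  have hgetpref : ∀ i (hi : i < kbar), Z.edges[i]'(by omega) = P.edges[i]'(by omega) := by
    intro i hi
    have h1 := List.getElem_of_eq hZ (i := i) (by simp; omega)
    rwa [List.getElem_take, List.getElem_take] at h1
  have hlink : tgt (P.edges[kbar-1]'(by omega)) = src (P.edges[kbar]'hk2) := by
    have := List.isChain_iff_getElem.mp P.chain (kbar-1) (by omega)
    simpa [List.get_eq_getElem, show kbar - 1 + 1 = kbar by omega] using this
  have h2 : kbar < Z.edges.length := by
    rcases lt_or_eq_of_le hlen with h | h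
    · exact h
    · exfalso
      have hlastZ := Z.last
      have hgl : Z.edges.getLast Z.ne = Z.edges[kbar-1]'(by omega) := by
        rw [List.getLast_eq_getElem]; congr 1; omega
      rw [hgl, hgetpref (kbar-1) (by omega)] at hlastZ
      rw [hlink] at hlastZ
      exact hdag.2.2.1 _ hlastZ
  refine ⟨h2, ?_⟩
  have hlinkZ : tgt (Z.edges[kbar-1]'(by omega)) = src (Z.edges[kbar]'h2) := by
    have := List.isChain_iff_getElem.mp Z.chain (kbar-1) (by omega)
    simpa [List.get_eq_getElem, show kbar - 1 + 1 = kbar by omega] using this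
  rw [← hlinkZ, hgetpref (kbar-1) (by omega), hlink]

end Helpers

/-- Zipper Lemma 1. -/
theorem statement10 (hdag : IsDAG src tgt s t) (f : E → ℝ)
    (hf : IsQuasiFlow src tgt s t f)
    (π π' : GPath src tgt s t → ℝ)
    (hπ : IsPathDecomp src tgt s t f π) (hπ' : IsPathDecomp src tgt s t f π')
    (P : GPath src tgt s t) (hP : π P ≠ 0)
    {U : ℕ} (Pu : Fin U → GPath src tgt s t) (hPuInj : Function.Injective Pu)
    (hPu : ∀ u, π' (Pu u) ≠ 0)
    (kbar : ℕ) (hk1 : 1 ≤ kbar) (hk2 : kbar < P.edges.length)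
    (hinit : ∀ u, (Pu u).edges.take kbar = P.edges.take kbar)
    (hle : π P ≤ ∑ u, π' (Pu u)) :
    ∃ (V : ℕ) (c : Fin V → ℝ) (R : Fin V → (GPath src tgt s t → ℝ))
      (W : ℕ) (Pw : Fin W → GPath src tgt s t),
      (∀ v, IsRyserSwap src tgt s t (R v)) ∧
      Function.Injective Pw ∧
      (∀ w, (Pw w).edges.take (kbar + 1) = P.edges.take (kbar + 1)) ∧
      π P ≤ ∑ w, (π' (Pw w) + ∑ v, c v * R v (Pw w)) := by
  classical
  by_cases hGall : ∀ u, (Pu u).edges.take (kbar+1) = P.edges.take (kbar+1)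
  · refine ⟨0, Fin.elim0, Fin.elim0, U, Pu, (fun v => v.elim0), hPuInj, hGall, ?_⟩
    simpa using hle
  push_neg at hGall
  obtain ⟨u0, hu0⟩ := hGall
  have hfinG : Finite (GPath src tgt s t) := gpath_finite hdag
  cases nonempty_fintype (GPath src tgt s t)
  -- notation
  set e : E := P.edges[kbar]'hk2 with he
  set A : List E := P.edges.take kbar with hA
  set n : N := src e with hn
  have hAlen : A.length = kbar := by rw [hA, List.length_take]; omega
  have hAne : A ≠ [] := by
    intro h0; rw [h0] at hAlen; simp at hAlen; omega
  have hgetA : ∀ i (hi : i < kbar), A[i]'(by omega) = P.edges[i]'(by omega) := by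
    intro i hi
    have h1 := List.getElem_of_eq hA (i := i) (by omega)
    rw [h1, List.getElem_take]
  have hlink0 : tgt (P.edges[kbar-1]'(by omega)) = n := by
    have h1 := List.isChain_iff_getElem.mp P.chain (kbar-1) (by omega)
    simp only [List.get_eq_getElem, show kbar - 1 + 1 = kbar by omega] at h1
    rw [h1, hn, he]
  have hn_ne_s : n ≠ s := by
    rw [← hlink0]; exact hdag.2.1 _
  have hAlast : tgt (A.getLast hAne) = n := by
    have hgl : A.getLast hAne = A[kbar-1]'(by omega) := by
      rw [List.getLast_eq_getElem]; congr 1; omega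
    rw [hgl, hgetA (kbar-1) (by omega), hlink0]
  have hPtake : P.edges.take (kbar+1) = A ++ [e] := by
    rw [List.take_succ, List.getElem?_eq_getElem hk2, ← he, ← hA]
    rfl
  have hmemPe : e ∈ P.edges := by rw [he]; exact List.getElem_mem _
  -- the anchor path X = Pu u0
  set X : GPath src tgt s t := Pu u0 with hX
  have hXpref : X.edges.take kbar = A := by rw [hA]; exact hinit u0
  obtain ⟨hXlen, hXsrc⟩ := split_lemma hdag P X kbar hk1 hk2 (by rw [hXpref, hA])
  set b0 : List E := X.edges.drop kbar with hb0
  have hXsplit : X.edges = A ++ b0 := by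
    rw [← hXpref, hb0]; exact (List.take_append_drop _ _).symm
  have hb0ne : b0 ≠ [] := by
    rw [hb0]; rw [Ne, List.drop_eq_nil_iff]; omega
  have hb0head : ∀ h : b0 ≠ [], src (b0.head h) = n := by
    intro h
    have h1 : b0.head h = X.edges[kbar]'hXlen := List.head_drop h
    rw [h1, hXsrc, ← he, ← hn]
  have hXnotgood : ¬ (X.edges.take (kbar+1) = P.edges.take (kbar+1)) := hu0
  -- e not in A
  have heA : e ∉ A := by
    intro hmem
    rw [hA] at hmem
    obtain ⟨i, hi, hie⟩ := List.mem_iff_getElem.mp hmem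
    have hik : i < kbar := by simp at hi; omega
    rw [List.getElem_take] at hie
    exact no_two_src_eq hdag P.chain hik hk2 (by omega) (by rw [hie, he])
  -- per-path facts, for paths containing e
  have hidxlt : ∀ Q : GPath src tgt s t, e ∈ Q.edges → Q.edges.idxOf e < Q.edges.length :=
    fun Q h => List.idxOf_lt_length_iff.mpr h
  have hidxget : ∀ (Q : GPath src tgt s t) (h : e ∈ Q.edges),
      Q.edges[Q.edges.idxOf e]'(hidxlt Q h) = e := by
    intro Q h
    have := List.idxOf_get (a := e) (l := Q.edges) (hidxlt Q h)
    simpa [List.get_eq_getElem] using this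
  have hidxpos : ∀ (Q : GPath src tgt s t), e ∈ Q.edges → 1 ≤ Q.edges.idxOf e := by
    intro Q h
    by_contra h0
    have h0' : Q.edges.idxOf e = 0 := by omega
    have hhd : Q.edges.head Q.ne = e := by
      rw [List.head_eq_getElem]
      have := hidxget Q h
      simp only [h0'] at this
      exact this
    have := Q.first
    rw [hhd] at this
    exact hn_ne_s (by rw [hn, this])
  have hdropne : ∀ (Q : GPath src tgt s t), e ∈ Q.edges →
      Q.edges.drop (Q.edges.idxOf e) ≠ [] := by
    intro Q h
    rw [Ne, List.drop_eq_nil_iff]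
    have := hidxlt Q h
    omega
  have hdrophead : ∀ (Q : GPath src tgt s t) (h : e ∈ Q.edges)
      (hne : Q.edges.drop (Q.edges.idxOf e) ≠ []),
      (Q.edges.drop (Q.edges.idxOf e)).head hne = e := by
    intro Q h hne
    rw [List.head_drop]
    exact hidxget Q h
  have htakene : ∀ (Q : GPath src tgt s t), e ∈ Q.edges →
      Q.edges.take (Q.edges.idxOf e) ≠ [] := by
    intro Q h h0
    have := congrArg List.length h0
    simp only [List.length_take, List.length_nil] at this
    have h1 := hidxpos Q h
    have h2 := hidxlt Q h
    omega
  have htakelast : ∀ (Q : GPath src tgt s t) (h : e ∈ Q.edges)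
      (hne : Q.edges.take (Q.edges.idxOf e) ≠ []),
      tgt ((Q.edges.take (Q.edges.idxOf e)).getLast hne) = n := by
    intro Q h hne
    have h1 := hidxpos Q h
    have h2 := hidxlt Q h
    have hgl : (Q.edges.take (Q.edges.idxOf e)).getLast hne
        = Q.edges[Q.edges.idxOf e - 1]'(by omega) := by
      rw [List.getLast_eq_getElem, List.getElem_take]
      congr 1
      simp only [List.length_take]
      omega
    rw [hgl]
    have hch := List.isChain_iff_getElem.mp Q.chain (Q.edges.idxOf e - 1) (by omega)
    simp only [List.get_eq_getElem,
      show Q.edges.idxOf e - 1 + 1 = Q.edges.idxOf e by omega] at hch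
    rw [hch, hidxget Q h, hn]
  -- construct the conjugate paths
  have hex : ∀ Q : GPath src tgt s t, ∃ TQ CQ : GPath src tgt s t,
      e ∈ Q.edges →
        TQ.edges = A ++ Q.edges.drop (Q.edges.idxOf e) ∧
        CQ.edges = Q.edges.take (Q.edges.idxOf e) ++ b0 := by
    intro Q
    by_cases hQ : e ∈ Q.edges
    · obtain ⟨TQ, hTQ⟩ := gpath_glue P Q A (Q.edges.drop (Q.edges.idxOf e)) hAne
        (hdropne Q hQ)
        ⟨P.edges.drop kbar, by rw [hA]; exact (List.take_append_drop _ _).symm⟩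
        ⟨Q.edges.take (Q.edges.idxOf e), (List.take_append_drop _ _).symm⟩
        (by rw [hAlast, hdrophead Q hQ (hdropne Q hQ), ← hn])
      obtain ⟨CQ, hCQ⟩ := gpath_glue Q X (Q.edges.take (Q.edges.idxOf e)) b0
        (htakene Q hQ) hb0ne
        ⟨Q.edges.drop (Q.edges.idxOf e), (List.take_append_drop _ _).symm⟩
        ⟨A, hXsplit⟩
        (by rw [htakelast Q hQ (htakene Q hQ), hb0head hb0ne])
      exact ⟨TQ, CQ, fun _ => ⟨hTQ, hCQ⟩⟩
    · exact ⟨P, P, fun h => absurd h hQ⟩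
  choose T C hTC using hex
  -- T Q has the good prefix
  have hTgood : ∀ Q : GPath src tgt s t, e ∈ Q.edges →
      (T Q).edges.take (kbar+1) = P.edges.take (kbar+1) := by
    intro Q hQ
    rw [(hTC Q hQ).1, hPtake, show kbar + 1 = A.length + 1 by omega, List.take_length_add_append]
    congr 1
    rw [List.take_one, List.head?_eq_head (hdropne Q hQ), hdrophead Q hQ (hdropne Q hQ)]
    rfl
  -- if Q is good then T Q = Q
  have hTfix : ∀ Q : GPath src tgt s t, e ∈ Q.edges →
      Q.edges.take (kbar+1) = P.edges.take (kbar+1) → T Q = Q := by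
    intro Q hQ hgood
    have hsplitQ : Q.edges = A ++ (e :: Q.edges.drop (kbar+1)) := by
      conv_lhs => rw [← List.take_append_drop (kbar+1) Q.edges]
      rw [hgood, hPtake]
      simp
    have hidx : Q.edges.idxOf e = kbar := by
      rw [hsplitQ, indexOf_append_left _ _ _ heA, List.idxOf_cons_self, hAlen]
      omega
    apply GPath.ext'
    rw [(hTC Q hQ).1, hidx]
    have hdrp : Q.edges.drop kbar = e :: Q.edges.drop (kbar+1) := by
      conv_lhs => rw [hsplitQ]
      exact List.drop_left' hAlen
    rw [hdrp]
    exact hsplitQ.symm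
  -- C Q is not good
  have hCbad : ∀ Q : GPath src tgt s t, e ∈ Q.edges →
      ¬ ((C Q).edges.take (kbar+1) = P.edges.take (kbar+1)) := by
    intro Q hQ hgood
    have hCedges := (hTC Q hQ).2
    rw [hCedges, hPtake] at hgood
    have hiQ : Q.edges.idxOf e < Q.edges.length := hidxlt Q hQ
    have hlentake : (Q.edges.take (Q.edges.idxOf e)).length = Q.edges.idxOf e := by
      simp only [List.length_take]; omega
    have hlen1 := congrArg List.length hgood
    simp only [List.length_take, List.length_append, List.length_cons, List.length_nil,
      hAlen] at hlen1
    have hXlenb : X.edges.length = kbar + b0.length := by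
      rw [hb0]; simp only [List.length_drop]; omega
    have hbound : kbar < ((Q.edges.take (Q.edges.idxOf e) ++ b0).take (kbar+1)).length := by
      simp only [List.length_take, List.length_append]; omega
    have hgetk := List.getElem_of_eq hgood hbound
    rw [List.getElem_take] at hgetk
    have hre : (A ++ [e])[kbar]'(by simp [hAlen]) = e := by
      rw [List.getElem_append_right (by omega)]
      have h0 : kbar - A.length = 0 := by omega
      simp [h0]
    rw [hre] at hgetk
    by_cases hik : Q.edges.idxOf e ≤ kbar
    · rw [List.getElem_append_right
        (by omega : (Q.edges.take (Q.edges.idxOf e)).length ≤ kbar)] at hgetk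
      have hXg : X.edges[kbar + (kbar - Q.edges.idxOf e)]'(by omega) = e := by
        have h5 : b0[kbar - (Q.edges.take (Q.edges.idxOf e)).length]'(by omega)
            = X.edges[kbar + (kbar - (Q.edges.take (Q.edges.idxOf e)).length)]'(by omega) :=
          List.getElem_drop
        have h6 : X.edges[kbar + (kbar - Q.edges.idxOf e)]'(by omega)
            = X.edges[kbar + (kbar - (Q.edges.take (Q.edges.idxOf e)).length)]'(by omega) := by
          congr 1; omega
        rw [h6, ← h5]
        exact hgetk
      by_cases hij0 : Q.edges.idxOf e = kbar
      · apply hXnotgood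
        have hXk : X.edges[kbar]'hXlen = e := by
          have h6 : X.edges[kbar]'hXlen
              = X.edges[kbar + (kbar - Q.edges.idxOf e)]'(by omega) := by
            congr 1; omega
          rw [h6, hXg]
        rw [List.take_succ, List.getElem?_eq_getElem hXlen, hXk, hXpref, hPtake]
        rfl
      · exact no_two_src_eq hdag X.chain
          (show kbar < kbar + (kbar - Q.edges.idxOf e) by omega)
          (by omega) hXlen (by rw [hXg, hXsrc, he])
    · rw [List.getElem_append_left
        (by omega : kbar < (Q.edges.take (Q.edges.idxOf e)).length)] at hgetk
      exact not_mem_take_indexOf Q.edges e (List.mem_iff_getElem.mpr ⟨kbar, by omega, hgetk⟩)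
  -- the swap vectors
  set Rfun : GPath src tgt s t → (GPath src tgt s t → ℝ) := fun Q =>
    indP src tgt s t (T Q) + indP src tgt s t (C Q) - indP src tgt s t X - indP src tgt s t Q
    with hRfun
  have hswap : ∀ Q : GPath src tgt s t, e ∈ Q.edges → IsRyserSwap src tgt s t (Rfun Q) := by
    intro Q hQ
    refine ⟨n, X, Q, T Q, C Q,
      ⟨A, b0, Q.edges.take (Q.edges.idxOf e), Q.edges.drop (Q.edges.idxOf e),
        ⟨hXsplit, hb0head, fun h0 => absurd h0 hb0ne⟩,
        ⟨(List.take_append_drop _ _).symm,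
          fun h0 => by rw [hdrophead Q hQ h0, hn],
          fun h0 => absurd h0 (hdropne Q hQ)⟩,
        (hTC Q hQ).1, (hTC Q hQ).2⟩, by rw [hRfun]⟩
  -- the relevant finsets
  set S : Finset (GPath src tgt s t) :=
    Finset.univ.filter (fun Q => e ∈ Q.edges ∧ π' Q ≠ 0) with hSdef
  set B : Finset (GPath src tgt s t) :=
    S.filter (fun Q => ¬ (Q.edges.take (kbar+1) = P.edges.take (kbar+1))) with hBdef
  set Wset : Finset (GPath src tgt s t) := S.image T with hWdef
  have hSmem : ∀ Q ∈ S, e ∈ Q.edges ∧ π' Q ≠ 0 := fun Q hQ => (Finset.mem_filter.mp hQ).2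
  have hπPle : π P ≤ ∑ Q ∈ S, π' Q := by
    have h1 : π P ≤ f e := by
      rw [hπ.2 e, finsum_eq_sum_of_fintype]
      have h2 := Finset.single_le_sum
        (f := fun Q : GPath src tgt s t => if e ∈ Q.edges then π Q else 0)
        (fun Q _ => by by_cases h : e ∈ Q.edges <;> simp [h, hπ.1 Q]) (Finset.mem_univ P)
      simpa [hmemPe] using h2
    have h2 : f e = ∑ Q ∈ S, π' Q := by
      have h3 : S = (Finset.univ.filter (fun Q : GPath src tgt s t => e ∈ Q.edges)).filter
          (fun Q => π' Q ≠ 0) := by rw [Finset.filter_filter]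
      calc f e = ∑ Q : GPath src tgt s t, (if e ∈ Q.edges then π' Q else 0) := by
            rw [hπ'.2 e, finsum_eq_sum_of_fintype]
        _ = ∑ Q ∈ Finset.univ.filter (fun Q : GPath src tgt s t => e ∈ Q.edges), π' Q :=
            (Finset.sum_filter _ _).symm
        _ = ∑ Q ∈ S, π' Q := by rw [h3, Finset.sum_filter_ne_zero]
    linarith
  have hWgood : ∀ Y ∈ Wset, Y.edges.take (kbar+1) = P.edges.take (kbar+1) := by
    intro Y hY
    obtain ⟨Q, hQS, rfl⟩ := Finset.mem_image.mp hY
    exact hTgood Q (hSmem Q hQS).1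
  have hTWmem : ∀ Q ∈ S, T Q ∈ Wset := fun Q hQ => Finset.mem_image.mpr ⟨Q, hQ, rfl⟩
  have hsub : S.filter (fun Q => Q.edges.take (kbar+1) = P.edges.take (kbar+1)) ⊆ Wset := by
    intro Q hQ
    obtain ⟨hQS, hQg⟩ := Finset.mem_filter.mp hQ
    have h4 := hTfix Q (hSmem Q hQS).1 hQg
    exact h4 ▸ hTWmem Q hQS
  have hkey : π P ≤ ∑ Y ∈ Wset, (π' Y + ∑ Q ∈ B, π' Q * Rfun Q Y) := by
    have hRval : ∀ Q ∈ B, ∀ Y ∈ Wset, Rfun Q Y = if Y = T Q then 1 else 0 := by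
      intro Q hQB Y hY
      obtain ⟨hQS, hQbad⟩ := Finset.mem_filter.mp hQB
      have hQe := (hSmem Q hQS).1
      have hYg := hWgood Y hY
      have hnc : Y ≠ C Q := fun h0 => hCbad Q hQe (h0 ▸ hYg)
      have hnx : Y ≠ X := fun h0 => hXnotgood (h0 ▸ hYg)
      have hnq : Y ≠ Q := fun h0 => hQbad (h0 ▸ hYg)
      by_cases hyt : Y = T Q
      · subst hyt
        simp [hRfun, indP, hnc, hnx, hnq]
      · simp [hRfun, indP, hyt, hnc, hnx, hnq]
    calc π P ≤ ∑ Q ∈ S, π' Q := hπPle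
      _ = ∑ Q ∈ S.filter (fun Q => Q.edges.take (kbar+1) = P.edges.take (kbar+1)), π' Q
          + ∑ Q ∈ B, π' Q :=
          (Finset.sum_filter_add_sum_filter_not S
            (fun Q => Q.edges.take (kbar+1) = P.edges.take (kbar+1)) π').symm
      _ ≤ ∑ Y ∈ Wset, π' Y + ∑ Q ∈ B, π' Q :=
          add_le_add_left
            (Finset.sum_le_sum_of_subset_of_nonneg hsub (fun Y _ _ => hπ'.1 Y)) _
      _ = ∑ Y ∈ Wset, π' Y + ∑ Q ∈ B, (∑ Y ∈ Wset, π' Q * (if Y = T Q then 1 else 0)) := by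
          congr 1
          refine Finset.sum_congr rfl (fun Q hQB => ?_)
          obtain ⟨hQS, _⟩ := Finset.mem_filter.mp hQB
          symm
          rw [← Finset.mul_sum, Finset.sum_ite_eq' Wset (T Q) (fun _ => (1:ℝ)),
            if_pos (hTWmem Q hQS), mul_one]
      _ = ∑ Y ∈ Wset, π' Y + ∑ Y ∈ Wset, ∑ Q ∈ B, π' Q * (if Y = T Q then 1 else 0) := by
          rw [Finset.sum_comm]
      _ = ∑ Y ∈ Wset, (π' Y + ∑ Q ∈ B, π' Q * Rfun Q Y) := by
          rw [← Finset.sum_add_distrib]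
          refine Finset.sum_congr rfl (fun Y hY => ?_)
          congr 1
          exact Finset.sum_congr rfl (fun Q hQB => by rw [hRval Q hQB Y hY])
  -- final packaging
  refine ⟨B.card, fun v => π' ((B.equivFin.symm v : {x // x ∈ B}) : GPath src tgt s t),
    fun v => Rfun ((B.equivFin.symm v : {x // x ∈ B}) : GPath src tgt s t),
    Wset.card, fun w => ((Wset.equivFin.symm w : {x // x ∈ Wset}) : GPath src tgt s t),
    ?_, ?_, ?_, ?_⟩
  · intro v
    have hm := (B.equivFin.symm v).2
    exact hswap _ (hSmem _ (Finset.mem_filter.mp hm).1).1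
  · exact Subtype.val_injective.comp Wset.equivFin.symm.injective
  · intro w; exact hWgood _ (Wset.equivFin.symm w).2
  · have houter := fun (g : GPath src tgt s t → ℝ) =>
      (Finset.sum_coe_sort Wset g) ▸
        (Equiv.sum_comp Wset.equivFin.symm (fun y : {x // x ∈ Wset} => g (y : GPath src tgt s t)))
    have hinner : ∀ Y : GPath src tgt s t,
        ∑ v : Fin B.card, π' ((B.equivFin.symm v : {x // x ∈ B}) : GPath src tgt s t) *
          Rfun ((B.equivFin.symm v : {x // x ∈ B}) : GPath src tgt s t) Y
          = ∑ Q ∈ B, π' Q * Rfun Q Y := by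
      intro Y
      rw [← Finset.sum_coe_sort B (fun Q => π' Q * Rfun Q Y)]
      exact Equiv.sum_comp B.equivFin.symm
        (fun q : {x // x ∈ B} => π' (q : GPath src tgt s t) * Rfun (q : GPath src tgt s t) Y)
    have hstep : ∑ w : Fin Wset.card,
        (π' ((Wset.equivFin.symm w : {x // x ∈ Wset}) : GPath src tgt s t)
          + ∑ Q ∈ B, π' Q * Rfun Q ((Wset.equivFin.symm w : {x // x ∈ Wset}) : GPath src tgt s t))
        = ∑ Y ∈ Wset, (π' Y + ∑ Q ∈ B, π' Q * Rfun Q Y) := by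
      rw [← Finset.sum_coe_sort Wset (fun Y => π' Y + ∑ Q ∈ B, π' Q * Rfun Q Y)]
      exact Equiv.sum_comp Wset.equivFin.symm
        (fun y : {x // x ∈ Wset} =>
          π' (y : GPath src tgt s t) + ∑ Q ∈ B, π' Q * Rfun Q (y : GPath src tgt s t))
    rw [← hstep] at hkey
    refine le_trans hkey (le_of_eq (Finset.sum_congr rfl (fun w _ => ?_)))
    rw [hinner]

end StmtDAG
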